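/- Let A ≤ 𝕂ˣ, 𝕂 of characteristic 0 with enough roots of unity, G and H finite groups with finite groups of A-valued characters, g ∈ G and h ∈ H. Then (H, ε_h) ≼ (G, ε_g) holds (i.e. there is N ⊴ G with (H,ε_h) ≅ (G/N, (ε_g)_N)) if and only if there exists a normal subgroup N of G and an isomorphism f : H → G/N with f(h) ∈ g·O(G)·N. -/

import Mathlib

open MonoidHom Pointwise

private lemma dvd_exponent_aux {ι G : Type*} [Finite ι] [CommGroup G] {n : ι → ℕ}
    (e : G ≃* ((i : ι) → Multiplicative (ZMod (n i)))) (i : ι) :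
    n i ∣ Monoid.exponent G := by
  classical
  have : n i = orderOf (e.symm <| Pi.mulSingle i <| .ofAdd 1) := by
    simpa only [MulEquiv.orderOf_eq, orderOf_piMulSingle, orderOf_ofAdd_eq_addOrderOf]
      using (ZMod.addOrderOf_one (n i)).symm
  exact this ▸ Monoid.order_dvd_exponent _

/-- Separation of points in a finite commutative group via homs into a group containing a
primitive `d`-th root of unity, `d` a multiple of the exponent. -/
lemma sep_lemma {C B : Type*} [CommGroup C] [CommGroup B] [Finite B] {d : ℕ} (hd0 : 0 < d)
    (hd : Monoid.exponent B ∣ d) {ζ : C} (hζ : IsPrimitiveRoot ζ d) {b : B} (hb : b ≠ 1) :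
    ∃ φ : B →* C, φ b ≠ 1 := by
  obtain ⟨ι, _, n, hn1, h⟩ := CommGroup.equiv_prod_multiplicative_zmod_of_finite B
  let e := h.some
  obtain ⟨i, hi⟩ : ∃ i : ι, e b i ≠ 1 := by
    contrapose! hb
    exact (MulEquiv.map_eq_one_iff e).mp <| funext hb
  haveI : NeZero (n i) := ⟨by have := hn1 i; omega⟩
  obtain ⟨a, ha⟩ : n i ∣ d := (dvd_exponent_aux e i).trans hd
  have hprim : IsPrimitiveRoot (ζ ^ a) (n i) := hζ.pow hd0 (by rw [ha, mul_comm])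
  have hcard : Nat.card (Multiplicative (ZMod (n i))) = n i := by
    simp [Nat.card_eq_fintype_card]
  obtain ⟨ψ, hψ⟩ := IsCyclic.exists_apply_ne_one (G := Multiplicative (ZMod (n i))) (G' := C)
    ⟨ζ ^ a, by rw [hcard]; exact hprim⟩ hi
  exact ⟨(ψ.comp (Pi.evalMonoidHom (fun i ↦ Multiplicative (ZMod (n i))) i)).comp e, by
    simpa using hψ⟩

theorem stmt_18 {𝕂 : Type*} [Field 𝕂] [CharZero 𝕂] (A : Subgroup 𝕂ˣ)
    (G H : Type*) [Group G] [Finite G] [Group H] [Finite H]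
    [Finite (G →* ↥A)] [Finite (H →* ↥A)]
    (g : G) (h : H) :
    (∃ N : Subgroup G, ∃ _ : N.Normal, ∃ f : H ≃* (G ⧸ N),
        ∀ φ : (G ⧸ N) →* ↥A, φ (f h) = φ ((QuotientGroup.mk g : G ⧸ N))) ↔
      (∃ N : Subgroup G, ∃ _ : N.Normal, ∃ f : H ≃* (G ⧸ N),
        ∃ x ∈ ⨅ φ : G →* ↥A, φ.ker,
          f h = (QuotientGroup.mk (g * x) : G ⧸ N)) := by
  constructor
  · rintro ⟨N, hN, f, hf⟩
    set O : Subgroup G := ⨅ φ : G →* ↥A, φ.ker with hOdef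
    have hOmem : ∀ x : G, x ∈ O ↔ ∀ φ : G →* ↥A, φ x = 1 := by
      intro x
      simp [hOdef, Subgroup.mem_iInf, MonoidHom.mem_ker]
    haveI hOn : O.Normal := by
      constructor
      intro x hx c
      rw [hOmem] at hx ⊢
      intro φ
      simp [map_mul, hx φ, mul_assoc]
    set P : Subgroup G := O ⊔ N with hPdef
    haveI hPn : P.Normal := Subgroup.sup_normal O N
    have hNP : N ≤ P := le_sup_right
    have hOP : O ≤ P := le_sup_left
    letI : CommGroup (G ⧸ P) :=
      { (inferInstance : Group (G ⧸ P)) with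
        mul_comm := by
          intro a b
          obtain ⟨x, rfl⟩ := QuotientGroup.mk_surjective a
          obtain ⟨y, rfl⟩ := QuotientGroup.mk_surjective b
          show ((x * y : G) : G ⧸ P) = ((y * x : G) : G ⧸ P)
          rw [QuotientGroup.eq]
          refine hOP ((hOmem _).mpr fun φ ↦ ?_)
          simp [map_mul, mul_comm (φ x) (φ y), mul_assoc] }
    -- the cyclic subgroup of character values
    set m : ℕ := Nat.card G with hmdef
    haveI : NeZero m := ⟨Nat.card_pos.ne'⟩
    set C : Subgroup 𝕂ˣ := A ⊓ rootsOfUnity m 𝕂 with hCdef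
    haveI : Finite C :=
      Finite.of_injective (Subgroup.inclusion (inf_le_right : C ≤ rootsOfUnity m 𝕂))
        (Subgroup.inclusion_injective _)
    set d : ℕ := Nat.card C with hddef
    have hd0 : 0 < d := Nat.card_pos
    -- character values lie in C
    have hval : ∀ (φ : G →* ↥A) (z : G), ((φ z : 𝕂ˣ)) ∈ C := by
      intro φ z
      have h1 : (φ z) ^ m = 1 := by rw [← map_pow, pow_card_eq_one', map_one]
      rw [hCdef, Subgroup.mem_inf]
      exact ⟨(φ z).2, (mem_rootsOfUnity m _).mpr (by simpa using congrArg Subtype.val h1)⟩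
    have hvald : ∀ (φ : G →* ↥A) (z : G), (φ z) ^ d = 1 := by
      intro φ z
      have h1 : (⟨(φ z : 𝕂ˣ), hval φ z⟩ : C) ^ d = 1 := pow_card_eq_one'
      have h2 : ((φ z : 𝕂ˣ)) ^ d = 1 := by simpa using congrArg Subtype.val h1
      exact Subtype.ext (by simpa using h2)
    -- exponent of G ⧸ P divides d
    have hexp : Monoid.exponent (G ⧸ P) ∣ d := by
      refine Monoid.exponent_dvd_of_forall_pow_eq_one fun b ↦ ?_
      obtain ⟨z, rfl⟩ := QuotientGroup.mk_surjective b
      show ((z : G) : G ⧸ P) ^ d = 1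
      rw [← QuotientGroup.mk_pow, QuotientGroup.eq_one_iff]
      exact hOP ((hOmem _).mpr fun φ ↦ by rw [map_pow, hvald])
    -- a primitive d-th root of unity in A
    obtain ⟨ζC, hζC⟩ := IsCyclic.exists_generator (α := C)
    have hordζ : orderOf ζC = d := orderOf_eq_card_of_forall_mem_zpowers hζC
    have hprimC : IsPrimitiveRoot ζC d := hordζ ▸ IsPrimitiveRoot.orderOf ζC
    have hprimA : IsPrimitiveRoot (Subgroup.inclusion (inf_le_left : C ≤ A) ζC) d :=
      hprimC.map_of_injective (Subgroup.inclusion_injective _)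
    -- the element y
    set y : G ⧸ N := (QuotientGroup.mk g : G ⧸ N)⁻¹ * f h with hydef
    have hy : ∀ ψ : (G ⧸ N) →* ↥A, ψ y = 1 := by
      intro ψ
      rw [hydef, map_mul, map_inv, hf ψ, inv_mul_cancel]
    obtain ⟨z, hz⟩ := QuotientGroup.mk_surjective y
    have hzP : z ∈ P := by
      by_contra hzP
      have hb : ((z : G) : G ⧸ P) ≠ 1 := by
        rw [Ne, QuotientGroup.eq_one_iff]
        exact hzP
      obtain ⟨ψ, hψ⟩ := sep_lemma hd0 hexp hprimA hb
      have hφN : ∀ n ∈ N, (ψ.comp (QuotientGroup.mk' P)) n = 1 := by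
        intro n hn
        simp only [MonoidHom.comp_apply, QuotientGroup.mk'_apply]
        rw [show ((n : G) : G ⧸ P) = 1 from (QuotientGroup.eq_one_iff n).mpr (hNP hn), map_one]
      have := hy (QuotientGroup.lift N (ψ.comp (QuotientGroup.mk' P)) hφN)
      rw [← hz] at this
      replace this : ψ ((z : G) : G ⧸ P) = 1 := this
      exact hψ this
    -- decompose z
    have hzmem : z ∈ (O : Set G) * (N : Set G) := by
      rw [← Subgroup.mul_normal O N]
      exact_mod_cast hzP
    obtain ⟨x, hxO, n, hnN, rfl⟩ := hzmem
    refine ⟨N, hN, f, x, hxO, ?_⟩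
    have hmkx : ((x : G) : G ⧸ N) = ((x * n : G) : G ⧸ N) := by
      rw [QuotientGroup.eq]
      simpa using hnN
    calc f h = (QuotientGroup.mk g : G ⧸ N) * y := by rw [hydef]; group
    _ = (QuotientGroup.mk g : G ⧸ N) * ((x * n : G) : G ⧸ N) := by rw [hz]
    _ = (QuotientGroup.mk (g * x) : G ⧸ N) := by
        rw [← hmkx, ← QuotientGroup.mk_mul]
  · rintro ⟨N, hN, f, x, hx, hfx⟩
    refine ⟨N, hN, f, fun φ ↦ ?_⟩
    rw [hfx, QuotientGroup.mk_mul, map_mul]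
    have : (φ.comp (QuotientGroup.mk' N)) x = 1 := by
      have := Subgroup.mem_iInf.mp hx (φ.comp (QuotientGroup.mk' N))
      exact this
    simp only [MonoidHom.comp_apply, QuotientGroup.mk'_apply] at this
    rw [this, mul_one]
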